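/- arXiv:2003.02153 — 2 statements merged into one kernel-verified Lean document; each statement's English description precedes it below -/
import Mathlib

section
/- Let R be a commutative ring, M a finitely generated R-module, and suppose there is a short exact sequence 0 → N → M → R^r → 0 of R-modules. Then the r-th Fitting ideal of M equals the 0-th Fitting ideal of N: Fitt_R^r(M) = Fitt_R^0(N). -/
/-- The `i`-th Fitting ideal of a module presented by the matrix `A` (with `n`
generators and `m` relations): the ideal generated by the `(n-i)×(n-i)` minors
of `A`. -/
def fittingIdeal {R : Type} [CommRing R] {n m : ℕ} (A : Matrix (Fin n) (Fin m) R)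
    (i : ℕ) : Ideal R :=
  Ideal.span {x : R | ∃ (r : Fin (n - i) → Fin n) (c : Fin (n - i) → Fin m),
    Function.Injective r ∧ Function.Injective c ∧ x = (A.submatrix r c).det}

section MinorsAux

open Matrix Function

variable {R : Type} [CommRing R]

def minorsIdeal {α β : Type} (A : Matrix α β R) (k : ℕ) : Ideal R :=
  Ideal.span {x : R | ∃ (r : Fin k → α) (c : Fin k → β),
    Function.Injective r ∧ Function.Injective c ∧ x = (A.submatrix r c).det}

theorem det_mem_minorsIdeal {α β : Type} (A : Matrix α β R) {k : ℕ}
    {r : Fin k → α} {c : Fin k → β} (hr : Function.Injective r)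
    (hc : Function.Injective c) : (A.submatrix r c).det ∈ minorsIdeal A k :=
  Ideal.subset_span ⟨r, c, hr, hc, rfl⟩

/-- Minors are invariant under reindexing by equivs. -/
theorem minorsIdeal_submatrix {α β α' β' : Type} (A : Matrix α β R)
    (e₁ : α' ≃ α) (e₂ : β' ≃ β) (k : ℕ) :
    minorsIdeal (A.submatrix e₁ e₂) k = minorsIdeal A k := by
  apply le_antisymm <;> rw [minorsIdeal, Ideal.span_le] <;>
    rintro x ⟨r, c, hr, hc, rfl⟩
  · rw [Matrix.submatrix_submatrix]
    exact det_mem_minorsIdeal A (e₁.injective.comp hr) (e₂.injective.comp hc)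
  · have : A.submatrix r c = (A.submatrix e₁ e₂).submatrix (e₁.symm ∘ r) (e₂.symm ∘ c) := by
      simp [Matrix.submatrix_submatrix, Function.comp_def]
    rw [this]
    exact det_mem_minorsIdeal _ (e₁.symm.injective.comp hr) (e₂.symm.injective.comp hc)

theorem minorsIdeal_succ_le {α β : Type} (A : Matrix α β R) (k : ℕ) :
    minorsIdeal A (k + 1) ≤ minorsIdeal A k := by
  rw [minorsIdeal, Ideal.span_le]
  rintro x ⟨r, c, hr, hc, rfl⟩
  rw [Matrix.det_succ_row_zero]
  refine Ideal.sum_mem _ fun j _ => Ideal.mul_mem_left _ _ ?_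
  rw [Matrix.submatrix_submatrix]
  exact det_mem_minorsIdeal A (hr.comp (Fin.succ_injective _))
    (hc.comp (Fin.succAbove_right_injective))

/-- If the column span of `A₂` is contained in that of `A₁`, minors ideals are contained. -/
theorem minorsIdeal_le_of_range_le {α β₁ β₂ : Type} [Fintype α] [Fintype β₁] [Fintype β₂]
    [DecidableEq α] [DecidableEq β₁] [DecidableEq β₂]
    (A₁ : Matrix α β₁ R) (A₂ : Matrix α β₂ R)
    (h : LinearMap.range A₂.mulVecLin ≤ LinearMap.range A₁.mulVecLin) (k : ℕ) :
    minorsIdeal A₂ k ≤ minorsIdeal A₁ k := by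
  have hcol : ∀ j : β₂, ∃ w : β₁ → R, A₁.mulVec w = fun i => A₂ i j := by
    intro j
    have : (fun i => A₂ i j) ∈ LinearMap.range A₂.mulVecLin := by
      refine ⟨Pi.single j 1, ?_⟩
      ext i
      simp [Matrix.mulVecLin_apply, Matrix.mulVec_single]
    exact h this
  choose w hw using hcol
  rw [minorsIdeal, Ideal.span_le]
  rintro x ⟨r, c, hr, hc, rfl⟩
  have hdet : (A₂.submatrix r c).det = Matrix.detRowAlternating
      (fun j : Fin k => ∑ t : β₁, w (c j) t • (fun i : Fin k => A₁ (r i) t)) := by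
    rw [← Matrix.det_transpose]
    congr 1
    funext j
    have := congrFun (hw (c j))
    funext i
    simp only [Matrix.transpose_apply, Matrix.submatrix_apply]
    rw [← this (r i)]
    simp [Matrix.mulVec, dotProduct, Finset.sum_apply, mul_comm]
  rw [hdet, ← AlternatingMap.coe_multilinearMap, MultilinearMap.map_sum]
  refine Ideal.sum_mem _ fun g _ => ?_
  rw [MultilinearMap.map_smul_univ]
  by_cases hg : Function.Injective g
  · refine Submodule.smul_mem _ _ ?_
    have h1 : (Matrix.detRowAlternating (fun j i : Fin k => A₁ (r i) (g j)) : R)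
        = ((A₁.submatrix r g).transpose).det := rfl
    show (Matrix.detRowAlternating (fun j i : Fin k => A₁ (r i) (g j)) : R) ∈ _
    rw [h1, Matrix.det_transpose]
    exact det_mem_minorsIdeal A₁ hr hg
  · have h0 : (Matrix.detRowAlternating (fun j i : Fin k => A₁ (r i) (g j)) : R) = 0 := by
      apply AlternatingMap.map_eq_zero_of_not_injective
      intro hinj
      apply hg
      intro a b hab
      exact hinj (by simp only []; rw [hab])
    show _ • (Matrix.detRowAlternating (fun j i : Fin k => A₁ (r i) (g j)) : R) ∈ _
    rw [h0]
    simp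

/-- extract an `inl`-valued factorization -/
theorem exists_factor_inl {k : ℕ} {α γ : Type} {f : Fin k → α ⊕ γ}
    (h : ∀ i, ∃ a, f i = Sum.inl a) : ∃ g : Fin k → α, f = Sum.inl ∘ g :=
  ⟨fun i => (h i).choose, funext fun i => (h i).choose_spec⟩

/-- Adding one generator together with the relation expressing it via the others
does not change the minors ideals (suitably shifted). -/
theorem minorsIdeal_oneStep {α β : Type} (A : Matrix α β R) (v : Matrix α (Fin 1) R) (k : ℕ) :
    minorsIdeal (Matrix.fromBlocks A v 0 1 : Matrix (α ⊕ Fin 1) (β ⊕ Fin 1) R) (k + 1) = minorsIdeal A k := by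
  set D : Matrix (α ⊕ Fin 1) (β ⊕ Fin 1) R := Matrix.fromBlocks A v 0 1 with hD
  apply le_antisymm
  · rw [minorsIdeal, Ideal.span_le]
    rintro x ⟨r, c, hr, hc, rfl⟩
    by_cases hrow : ∃ i₀, r i₀ = Sum.inr 0
    · obtain ⟨i₀, hi₀⟩ := hrow
      by_cases hcol : ∃ j₀, c j₀ = Sum.inr 0
      · obtain ⟨j₀, hj₀⟩ := hcol
        rw [Matrix.det_succ_row _ i₀]
        refine Ideal.sum_mem _ fun j _ => ?_
        by_cases hj : j = j₀
        · subst hj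
          refine Ideal.mul_mem_left _ _ ?_
          -- the minor avoiding row i₀ and column j is a k-minor of A
          have hrows : ∀ i : Fin k, ∃ a, r (i₀.succAbove i) = Sum.inl a := by
            intro i
            rcases h' : r (i₀.succAbove i) with a | b
            · exact ⟨a, rfl⟩
            · exfalso
              have hb : b = 0 := Subsingleton.elim _ _
              rw [hb] at h'
              exact (Fin.succAbove_ne i₀ i) (hr (h'.trans hi₀.symm))
          have hcols : ∀ i : Fin k, ∃ b, c (j.succAbove i) = Sum.inl b := by
            intro i
            rcases h' : c (j.succAbove i) with a | b
            · exact ⟨a, rfl⟩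
            · exfalso
              have hb : b = 0 := Subsingleton.elim _ _
              rw [hb] at h'
              exact (Fin.succAbove_ne j i) (hc (h'.trans hj₀.symm))
          obtain ⟨ρ, hρ⟩ := exists_factor_inl hrows
          obtain ⟨τ, hτ⟩ := exists_factor_inl hcols
          have hρi : Function.Injective ρ := fun a b hab => by
            have := hr (show r (i₀.succAbove a) = r (i₀.succAbove b) by
              rw [congrFun hρ a, congrFun hρ b]; simp [hab])
            exact Fin.succAbove_right_injective this
          have hτi : Function.Injective τ := fun a b hab => by
            have := hc (show c (j.succAbove a) = c (j.succAbove b) by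
              rw [congrFun hτ a, congrFun hτ b]; simp [hab])
            exact Fin.succAbove_right_injective this
          have : ((D.submatrix r c).submatrix i₀.succAbove j.succAbove)
              = A.submatrix ρ τ := by
            ext i j
            simp only [Matrix.submatrix_apply]
            rw [congrFun hρ i, congrFun hτ j]
            rfl
          rw [this]
          exact det_mem_minorsIdeal A hρi hτi
        · have : (D.submatrix r c) i₀ j = 0 := by
            rcases h' : c j with a | b
            · simp [Matrix.submatrix_apply, hi₀, h', hD]
            · exfalso
              have hb : b = 0 := Subsingleton.elim _ _
              rw [hb] at h'
              exact hj (hc (h'.trans hj₀.symm))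
          rw [this]
          simp
      · -- the whole row i₀ of the submatrix is zero
        push_neg at hcol
        have : (D.submatrix r c).det = 0 := by
          apply Matrix.det_eq_zero_of_row_eq_zero i₀
          intro j
          rcases h' : c j with a | b
          · simp [Matrix.submatrix_apply, hi₀, h', hD]
          · exact absurd (h'.trans (by rw [Subsingleton.elim b 0])) (hcol j)
        rw [this]; simp
    · push_neg at hrow
      have hrows : ∀ i, ∃ a, r i = Sum.inl a := by
        intro i
        rcases h' : r i with a | b
        · exact ⟨a, rfl⟩
        · exact absurd (h'.trans (by rw [Subsingleton.elim b 0])) (hrow i)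
      obtain ⟨ρ, hρ⟩ := exists_factor_inl hrows
      have hρi : Function.Injective ρ := fun a b hab => hr (by
        rw [congrFun hρ a, congrFun hρ b]; simp [hab])
      by_cases hcol : ∃ j₀, c j₀ = Sum.inr 0
      · obtain ⟨j₀, hj₀⟩ := hcol
        rw [Matrix.det_succ_column _ j₀]
        refine Ideal.sum_mem _ fun i _ => Ideal.mul_mem_left _ _ ?_
        have hcols : ∀ t : Fin k, ∃ b, c (j₀.succAbove t) = Sum.inl b := by
          intro t
          rcases h' : c (j₀.succAbove t) with a | b
          · exact ⟨a, rfl⟩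
          · exfalso
            have hb : b = 0 := Subsingleton.elim _ _
            rw [hb] at h'
            exact (Fin.succAbove_ne j₀ t) (hc (h'.trans hj₀.symm))
        obtain ⟨τ, hτ⟩ := exists_factor_inl hcols
        have hτi : Function.Injective τ := fun a b hab => by
          have := hc (show c (j₀.succAbove a) = c (j₀.succAbove b) by
            rw [congrFun hτ a, congrFun hτ b]; simp [hab])
          exact Fin.succAbove_right_injective this
        have : ((D.submatrix r c).submatrix i.succAbove j₀.succAbove)
            = A.submatrix (ρ ∘ i.succAbove) τ := by
          ext a b
          simp only [Matrix.submatrix_apply]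
          rw [congrFun hρ (i.succAbove a), congrFun hτ b]
          rfl
        rw [this]
        exact det_mem_minorsIdeal A (hρi.comp Fin.succAbove_right_injective) hτi
      · push_neg at hcol
        have hcols : ∀ j, ∃ b, c j = Sum.inl b := by
          intro j
          rcases h' : c j with a | b
          · exact ⟨a, rfl⟩
          · exact absurd (h'.trans (by rw [Subsingleton.elim b 0])) (hcol j)
        obtain ⟨τ, hτ⟩ := exists_factor_inl hcols
        have hτi : Function.Injective τ := fun a b hab => hc (by
          rw [congrFun hτ a, congrFun hτ b]; simp [hab])
        have : D.submatrix r c = A.submatrix ρ τ := by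
          ext a b
          simp only [Matrix.submatrix_apply]
          rw [congrFun hρ a, congrFun hτ b]
          rfl
        rw [this]
        exact minorsIdeal_succ_le A k (det_mem_minorsIdeal A hρi hτi)
  · rw [minorsIdeal, Ideal.span_le]
    rintro x ⟨ρ, τ, hρ, hτ, rfl⟩
    set r : Fin (k+1) → α ⊕ Fin 1 := Fin.snoc (Sum.inl ∘ ρ) (Sum.inr 0) with hrdef
    set c : Fin (k+1) → β ⊕ Fin 1 := Fin.snoc (Sum.inl ∘ τ) (Sum.inr 0) with hcdef
    have hcase : ∀ x : Fin (k+1), x = Fin.last k ∨ ∃ y : Fin k, x = y.castSucc := fun x =>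
      x.lastCases (Or.inl rfl) (fun y => Or.inr ⟨y, rfl⟩)
    have hr : Function.Injective r := by
      intro a b hab
      rcases hcase a with ha | ⟨a', ha⟩ <;> rcases hcase b with hb | ⟨b', hb⟩ <;>
        subst ha <;> subst hb <;>
        simp [hrdef, Fin.snoc_last, Fin.snoc_castSucc] at hab ⊢
      exact hρ hab
    have hc : Function.Injective c := by
      intro a b hab
      rcases hcase a with ha | ⟨a', ha⟩ <;> rcases hcase b with hb | ⟨b', hb⟩ <;>
        subst ha <;> subst hb <;>
        simp [hcdef, Fin.snoc_last, Fin.snoc_castSucc] at hab ⊢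
      exact hτ hab
    have hdet : (D.submatrix r c).det = (A.submatrix ρ τ).det := by
      rw [Matrix.det_succ_row _ (Fin.last k)]
      rw [Finset.sum_eq_single (Fin.last k)]
      · have h1 : (D.submatrix r c) (Fin.last k) (Fin.last k) = 1 := by
          simp [hrdef, hcdef, Fin.snoc_last, hD, Matrix.one_apply]
        have h2 : ((D.submatrix r c).submatrix (Fin.last k).succAbove (Fin.last k).succAbove)
            = A.submatrix ρ τ := by
          ext i j
          simp [Fin.succAbove_last, hrdef, hcdef, Fin.snoc_castSucc, hD]
        rw [h1, h2]
        have h3 : (-1 : R) ^ ((Fin.last k : ℕ) + (Fin.last k : ℕ)) = 1 := by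
          rw [Fin.val_last, ← two_mul, pow_mul]
          norm_num
        rw [h3]
        ring
      · intro j _ hj
        rcases hcase j with hj' | ⟨j', hj'⟩
        · exact absurd hj' hj
        · subst hj'
          have : (D.submatrix r c) (Fin.last k) j'.castSucc = 0 := by
            simp [hrdef, hcdef, Fin.snoc_last, Fin.snoc_castSucc, hD]
          rw [this]
          ring
      · intro h
        exact absurd (Finset.mem_univ _) h
    rw [← hdet]
    exact det_mem_minorsIdeal D hr hc

theorem minorsIdeal_fromBlocks_one_fin {α β : Type} (A : Matrix α β R) (c : ℕ) (k : ℕ)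
    (Ψ : Matrix α (Fin c) R) :
    minorsIdeal (Matrix.fromBlocks A Ψ 0 1 : Matrix (α ⊕ Fin c) (β ⊕ Fin c) R) (k + c)
      = minorsIdeal A k := by
  induction c with
  | zero =>
    have : (Matrix.fromBlocks A Ψ 0 1 : Matrix (α ⊕ Fin 0) (β ⊕ Fin 0) R)
        = A.submatrix (Equiv.sumEmpty α (Fin 0)) (Equiv.sumEmpty β (Fin 0)) := by
      ext i j
      rcases i with a | t
      · rcases j with b | s
        · rfl
        · exact s.elim0
      · exact t.elim0
    rw [this, minorsIdeal_submatrix, Nat.add_zero]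
  | succ c ih =>
    set eγ : Fin (c+1) ≃ (Fin c ⊕ Fin 1) := finSumFinEquiv.symm with heγ
    set er : (α ⊕ Fin (c+1)) ≃ ((α ⊕ Fin c) ⊕ Fin 1) :=
      (Equiv.sumCongr (Equiv.refl α) eγ).trans (Equiv.sumAssoc α (Fin c) (Fin 1)).symm with her
    set ec : (β ⊕ Fin (c+1)) ≃ ((β ⊕ Fin c) ⊕ Fin 1) :=
      (Equiv.sumCongr (Equiv.refl β) eγ).trans (Equiv.sumAssoc β (Fin c) (Fin 1)).symm with hec
    set Ψ' : Matrix α (Fin c) R := fun a t => Ψ a t.castSucc with hΨ'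
    set v : Matrix (α ⊕ Fin c) (Fin 1) R :=
      fun i _ => Sum.elim (fun a => Ψ a (Fin.last c)) (fun _ => (0:R)) i with hv
    have key : (Matrix.fromBlocks A Ψ 0 1 : Matrix (α ⊕ Fin (c+1)) (β ⊕ Fin (c+1)) R)
        = (Matrix.fromBlocks (Matrix.fromBlocks A Ψ' 0 1) v 0 1).submatrix er ec := by
      ext i j
      have hsplit : ∀ t : Fin (c+1), (∃ t' : Fin c, t = Fin.castAdd 1 t') ∨ t = Fin.natAdd c 0 := by
        intro t
        refine t.lastCases (Or.inr ?_) (fun t' => Or.inl ⟨t', ?_⟩)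
        · ext; simp
        · ext; simp [Fin.castSucc]
      rcases i with a | t <;> rcases j with b | s
      · rfl
      · rcases hsplit s with ⟨s', rfl⟩ | rfl
        · simp [her, hec, heγ, hΨ', hv, Matrix.fromBlocks, Fin.castSucc]
        · simp [her, hec, heγ, hΨ', hv, Matrix.fromBlocks]
          exact congrArg (Ψ a) (by ext; simp)
      · rcases hsplit t with ⟨t', rfl⟩ | rfl <;>
          simp [her, hec, heγ, hv, Matrix.fromBlocks]
      · rcases hsplit t with ⟨t', rfl⟩ | rfl <;> rcases hsplit s with ⟨s', rfl⟩ | rfl <;>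
          simp [her, hec, heγ, hv, Matrix.fromBlocks, Matrix.one_apply, Fin.ext_iff,
            Fin.castSucc] <;> omega
    rw [key, minorsIdeal_submatrix]
    have : k + (c + 1) = (k + c) + 1 := by omega
    rw [this, minorsIdeal_oneStep, ih]

theorem minorsIdeal_fromBlocks_one {α β γ : Type} [Fintype γ] [DecidableEq γ]
    (A : Matrix α β R) (Ψ : Matrix α γ R) (k : ℕ) :
    minorsIdeal (Matrix.fromBlocks A Ψ 0 1 : Matrix (α ⊕ γ) (β ⊕ γ) R) (k + Fintype.card γ)
      = minorsIdeal A k := by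
  set e : γ ≃ Fin (Fintype.card γ) := Fintype.equivFin γ with he
  have key : (Matrix.fromBlocks A Ψ 0 1 : Matrix (α ⊕ γ) (β ⊕ γ) R)
      = (Matrix.fromBlocks A (Ψ.submatrix id e.symm) 0 1 :
          Matrix (α ⊕ Fin (Fintype.card γ)) (β ⊕ Fin (Fintype.card γ)) R).submatrix
        (Equiv.sumCongr (Equiv.refl α) e) (Equiv.sumCongr (Equiv.refl β) e) := by
    ext i j
    rcases i with a | g <;> rcases j with b | g' <;>
      simp [Matrix.fromBlocks, Matrix.one_apply, e.injective.eq_iff]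
  rw [key, minorsIdeal_submatrix, minorsIdeal_fromBlocks_one_fin]

/-- Stacking zero rows below a matrix does not change the minors. -/
theorem minorsIdeal_stack_zero {α β γ : Type} (B : Matrix α β R) (k : ℕ) :
    minorsIdeal (Matrix.of (fun (i : α ⊕ γ) (j : β) => Sum.elim (fun a => B a j) (fun _ => (0:R)) i)) k
      = minorsIdeal B k := by
  set S : Matrix (α ⊕ γ) β R :=
    Matrix.of (fun i j => Sum.elim (fun a => B a j) (fun _ => (0:R)) i) with hS
  apply le_antisymm <;> rw [minorsIdeal, Ideal.span_le] <;> rintro x ⟨r, c, hr, hc, rfl⟩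
  · by_cases hrow : ∀ i, ∃ a, r i = Sum.inl a
    · obtain ⟨ρ, hρ⟩ : ∃ g : Fin k → α, r = Sum.inl ∘ g :=
        ⟨fun i => (hrow i).choose, funext fun i => (hrow i).choose_spec⟩
      have hρi : Function.Injective ρ := fun a b hab => hr (by
        rw [congrFun hρ a, congrFun hρ b]; simp [hab])
      have : S.submatrix r c = B.submatrix ρ c := by
        ext i j
        simp only [Matrix.submatrix_apply]
        rw [congrFun hρ i]
        rfl
      rw [this]
      exact det_mem_minorsIdeal B hρi hc
    · push_neg at hrow
      obtain ⟨i₀, hi₀⟩ := hrow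
      have : (S.submatrix r c).det = 0 := by
        apply Matrix.det_eq_zero_of_row_eq_zero i₀
        intro j
        rcases h' : r i₀ with a | g
        · exact absurd h' (hi₀ a)
        · simp [Matrix.submatrix_apply, h', hS]
      rw [this]; simp
  · have : B.submatrix r c = S.submatrix (Sum.inl ∘ r) c := rfl
    rw [this]
    exact det_mem_minorsIdeal S (Sum.inl_injective.comp hr) hc

section Doubled

variable {α₁ α₂ β₁ : Type} [Fintype α₁] [Fintype α₂] [Fintype β₁]
  [DecidableEq α₁] [DecidableEq α₂] [DecidableEq β₁]
  {M : Type} [AddCommGroup M] [Module R M]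

/-- Kernel of the combined projection, as the column span of a block matrix. -/
theorem ker_doubled (π₁ : (α₁ → R) →ₗ[R] M) (hπ₁ : Function.Surjective π₁)
    (A₁ : Matrix α₁ β₁ R) (hA₁ : LinearMap.ker π₁ = LinearMap.range A₁.mulVecLin)
    (π₂ : (α₂ → R) →ₗ[R] M) :
    ∃ Ψ : Matrix α₁ α₂ R,
      LinearMap.ker (π₁ ∘ₗ LinearMap.funLeft R R Sum.inl
          + π₂ ∘ₗ LinearMap.funLeft R R Sum.inr)
        = LinearMap.range
            (Matrix.fromBlocks A₁ Ψ 0 1 : Matrix (α₁ ⊕ α₂) (β₁ ⊕ α₂) R).mulVecLin := by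
  have hψ : ∀ j : α₂, ∃ w : α₁ → R, π₁ w = - π₂ (Pi.single j 1) := fun j => hπ₁ _
  choose ψ hψ using hψ
  refine ⟨Matrix.of (fun i j => ψ j i), ?_⟩
  set Ψ : Matrix α₁ α₂ R := Matrix.of (fun i j => ψ j i) with hΨ
  set C : Matrix (α₁ ⊕ α₂) (β₁ ⊕ α₂) R := Matrix.fromBlocks A₁ Ψ 0 1 with hC
  set π : ((α₁ ⊕ α₂) → R) →ₗ[R] M :=
    π₁ ∘ₗ LinearMap.funLeft R R Sum.inl + π₂ ∘ₗ LinearMap.funLeft R R Sum.inr with hπdef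
  have hπapp : ∀ x : (α₁ ⊕ α₂) → R, π x = π₁ (x ∘ Sum.inl) + π₂ (x ∘ Sum.inr) := by
    intro x; rfl
  have hΨmul : ∀ y : α₂ → R, π₁ (Ψ.mulVec y) = - π₂ y := by
    intro y
    have h1 : Ψ.mulVec y = ∑ j : α₂, y j • ψ j := by
      ext i
      simp [Matrix.mulVec, dotProduct, hΨ, Finset.sum_apply, mul_comm]
    have h2 : y = ∑ j : α₂, y j • (Pi.single j (1:R) : α₂ → R) := by
      ext i
      simp [Finset.sum_apply, Pi.single_apply]
    rw [h1, map_sum]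
    conv_rhs => rw [h2]
    rw [map_sum, ← Finset.sum_neg_distrib]
    refine Finset.sum_congr rfl fun j _ => ?_
    rw [LinearMap.map_smul, LinearMap.map_smul, hψ j]
    simp
  ext x
  constructor
  · intro hx
    rw [LinearMap.mem_ker, hπapp] at hx
    have hu : π₁ (x ∘ Sum.inl - Ψ.mulVec (x ∘ Sum.inr)) = 0 := by
      rw [map_sub, hΨmul]
      rw [sub_neg_eq_add, hx]
    rw [← LinearMap.mem_ker, hA₁] at hu
    obtain ⟨w, hw⟩ := hu
    refine ⟨Sum.elim w (x ∘ Sum.inr), ?_⟩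
    have hw' : A₁.mulVec w = x ∘ Sum.inl - Ψ.mulVec (x ∘ Sum.inr) := hw
    ext i
    rcases i with i | i
    · have : C.mulVec (Sum.elim w (x ∘ Sum.inr)) (Sum.inl i)
          = A₁.mulVec w i + Ψ.mulVec (x ∘ Sum.inr) i := by
        simp [Matrix.mulVec, dotProduct, hC, Matrix.fromBlocks, Fintype.sum_sum_type]
      rw [Matrix.mulVecLin_apply, this, hw']
      simp
    · have : C.mulVec (Sum.elim w (x ∘ Sum.inr)) (Sum.inr i) = x (Sum.inr i) := by
        simp [Matrix.mulVec, dotProduct, hC, Matrix.fromBlocks, Fintype.sum_sum_type,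
          Matrix.one_apply]
      rw [Matrix.mulVecLin_apply, this]
  · rintro ⟨y, rfl⟩
    rw [LinearMap.mem_ker, hπapp]
    have h1 : (C.mulVecLin y) ∘ Sum.inl = A₁.mulVec (y ∘ Sum.inl) + Ψ.mulVec (y ∘ Sum.inr) := by
      ext i
      simp [Matrix.mulVecLin_apply, Matrix.mulVec, dotProduct, hC, Matrix.fromBlocks,
        Fintype.sum_sum_type]
    have h2 : (C.mulVecLin y) ∘ Sum.inr = y ∘ Sum.inr := by
      ext i
      simp [Matrix.mulVecLin_apply, Matrix.mulVec, dotProduct, hC, Matrix.fromBlocks,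
        Fintype.sum_sum_type, Matrix.one_apply]
    rw [h1, h2, map_add, hΨmul]
    have h3 : π₁ (A₁.mulVec (y ∘ Sum.inl)) = 0 := by
      rw [← Matrix.mulVecLin_apply, ← LinearMap.mem_ker, hA₁]
      exact ⟨_, rfl⟩
    rw [h3]
    simp only [zero_add]
    abel

end Doubled

/-- Fitting-ideal invariance: two finite presentations of the same module give the same
ideals of minors (with matching shifts). -/
theorem minorsIdeal_invariance {α₁ β₁ α₂ β₂ : Type}
    [Fintype α₁] [Fintype β₁] [Fintype α₂] [Fintype β₂]
    [DecidableEq α₁] [DecidableEq β₁] [DecidableEq α₂] [DecidableEq β₂]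
    {M : Type} [AddCommGroup M] [Module R M]
    (π₁ : (α₁ → R) →ₗ[R] M) (hπ₁ : Function.Surjective π₁)
    (A₁ : Matrix α₁ β₁ R) (hA₁ : LinearMap.ker π₁ = LinearMap.range A₁.mulVecLin)
    (π₂ : (α₂ → R) →ₗ[R] M) (hπ₂ : Function.Surjective π₂)
    (A₂ : Matrix α₂ β₂ R) (hA₂ : LinearMap.ker π₂ = LinearMap.range A₂.mulVecLin)
    (k₁ k₂ : ℕ) (hk : k₁ + Fintype.card α₂ = k₂ + Fintype.card α₁) :
    minorsIdeal A₁ k₁ = minorsIdeal A₂ k₂ := by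
  obtain ⟨Ψ, hΨ⟩ := ker_doubled π₁ hπ₁ A₁ hA₁ π₂
  obtain ⟨Φ, hΦ⟩ := ker_doubled π₂ hπ₂ A₂ hA₂ π₁
  set C₁ : Matrix (α₁ ⊕ α₂) (β₁ ⊕ α₂) R := Matrix.fromBlocks A₁ Ψ 0 1 with hC₁
  set C₂ : Matrix (α₂ ⊕ α₁) (β₂ ⊕ α₁) R := Matrix.fromBlocks A₂ Φ 0 1 with hC₂
  set C₂' : Matrix (α₁ ⊕ α₂) (β₂ ⊕ α₁) R := C₂.submatrix (Equiv.sumComm α₁ α₂) (Equiv.refl (β₂ ⊕ α₁)) with hC₂'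
  -- the two column spans agree
  have hswap : ∀ v : (β₂ ⊕ α₁) → R, C₂'.mulVec v = (C₂.mulVec v) ∘ Sum.swap := by
    intro v
    ext i
    rfl
  have hrange : LinearMap.range C₂'.mulVecLin = LinearMap.range C₁.mulVecLin := by
    rw [← hΨ]
    ext x
    simp only [LinearMap.mem_range, LinearMap.mem_ker]
    constructor
    · rintro ⟨v, rfl⟩
      have hy : C₂.mulVecLin v ∈ LinearMap.ker
          (π₂ ∘ₗ LinearMap.funLeft R R Sum.inl + π₁ ∘ₗ LinearMap.funLeft R R Sum.inr) := by
        rw [hΦ]; exact ⟨v, rfl⟩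
      rw [LinearMap.mem_ker] at hy
      show π₁ ((C₂'.mulVecLin v) ∘ Sum.inl) + π₂ ((C₂'.mulVecLin v) ∘ Sum.inr) = 0
      have e1 : (C₂'.mulVecLin v) ∘ Sum.inl = (C₂.mulVecLin v) ∘ Sum.inr := rfl
      have e2 : (C₂'.mulVecLin v) ∘ Sum.inr = (C₂.mulVecLin v) ∘ Sum.inl := rfl
      rw [e1, e2, add_comm]
      exact hy
    · intro hx
      have hy : x ∘ Sum.swap ∈ LinearMap.ker
          (π₂ ∘ₗ LinearMap.funLeft R R Sum.inl + π₁ ∘ₗ LinearMap.funLeft R R Sum.inr) := by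
        rw [LinearMap.mem_ker]
        show π₂ ((x ∘ Sum.swap) ∘ Sum.inl) + π₁ ((x ∘ Sum.swap) ∘ Sum.inr) = 0
        have e1 : (x ∘ Sum.swap) ∘ Sum.inl = x ∘ Sum.inr := rfl
        have e2 : (x ∘ Sum.swap) ∘ Sum.inr = x ∘ Sum.inl := rfl
        rw [e1, e2, add_comm]
        exact hx
      rw [hΦ] at hy
      obtain ⟨v, hv⟩ := hy
      refine ⟨v, ?_⟩
      ext i
      have h1 : C₂'.mulVecLin v i = C₂.mulVecLin v (Sum.swap i) := rfl
      rw [h1, hv]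
      simp
  have h1 : minorsIdeal C₁ (k₁ + Fintype.card α₂) = minorsIdeal C₂' (k₁ + Fintype.card α₂) :=
    le_antisymm (minorsIdeal_le_of_range_le C₂' C₁ (le_of_eq hrange.symm) _)
      (minorsIdeal_le_of_range_le C₁ C₂' (le_of_eq hrange) _)
  calc minorsIdeal A₁ k₁
      = minorsIdeal C₁ (k₁ + Fintype.card α₂) := (minorsIdeal_fromBlocks_one A₁ Ψ k₁).symm
    _ = minorsIdeal C₂' (k₁ + Fintype.card α₂) := h1
    _ = minorsIdeal C₂ (k₁ + Fintype.card α₂) := by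
        rw [hC₂', minorsIdeal_submatrix C₂ (Equiv.sumComm α₁ α₂) (Equiv.refl (β₂ ⊕ α₁))]
    _ = minorsIdeal A₂ k₂ := by
        rw [hk, minorsIdeal_fromBlocks_one A₂ Φ k₂]

end MinorsAux

/-- Let `R` be a commutative ring and `0 → N → M → R^r → 0` a short exact sequence of
(finitely presented) `R`-modules.  Then the `r`-th Fitting ideal of `M` equals the
`0`-th Fitting ideal of `N`.  (Fitting ideals are computed from arbitrary finite
presentations of `M` and `N`.) -/
theorem stmt5 (R : Type) [CommRing R] (r : ℕ)
    (M N : Type) [AddCommGroup M] [Module R M] [AddCommGroup N] [Module R N]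
    -- a finite presentation of M by the matrix A
    (n mA : ℕ) (A : Matrix (Fin n) (Fin mA) R) (πM : (Fin n → R) →ₗ[R] M)
    (hπM : Function.Surjective πM) (hA : LinearMap.ker πM = LinearMap.range A.mulVecLin)
    -- a finite presentation of N by the matrix B
    (n' mB : ℕ) (B : Matrix (Fin n') (Fin mB) R) (πN : (Fin n' → R) →ₗ[R] N)
    (hπN : Function.Surjective πN) (hB : LinearMap.ker πN = LinearMap.range B.mulVecLin)
    -- the short exact sequence 0 → N → M → R^r → 0
    (f : N →ₗ[R] M) (g : M →ₗ[R] (Fin r → R))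
    (hf : Function.Injective f) (hg : Function.Surjective g)
    (hfg : LinearMap.range f = LinearMap.ker g) :
    fittingIdeal A r = fittingIdeal B 0 := by
  rcases subsingleton_or_nontrivial R with hR | hR
  · ext x
    have hx : x = 0 := Subsingleton.elim x 0
    simp [hx]
  -- r ≤ n by the rank condition
  have hrn : r ≤ n := le_of_fin_surjective R (g ∘ₗ πM) (hg.comp hπM)
  -- split the surjection g
  obtain ⟨s, hs⟩ := Module.projective_lifting_property g LinearMap.id hg
  have hgs : ∀ y, g (s y) = y := fun y => congrFun (congrArg (fun h => h.toFun) hs) y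
  -- a presentation of M with generators Fin n' ⊕ Fin r and relation matrix B stacked with 0
  set π' : ((Fin n' ⊕ Fin r) → R) →ₗ[R] M :=
    (f ∘ₗ πN) ∘ₗ LinearMap.funLeft R R Sum.inl + s ∘ₗ LinearMap.funLeft R R Sum.inr with hπ'
  have hπ'app : ∀ x : (Fin n' ⊕ Fin r) → R,
      π' x = f (πN (x ∘ Sum.inl)) + s (x ∘ Sum.inr) := fun x => rfl
  set S : Matrix (Fin n' ⊕ Fin r) (Fin mB) R :=
    Matrix.of (fun i j => Sum.elim (fun a => B a j) (fun _ => (0:R)) i) with hS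
  have hgf : ∀ y : N, g (f y) = 0 := by
    intro y
    have : f y ∈ LinearMap.ker g := hfg ▸ LinearMap.mem_range_self f y
    exact this
  have hπ'surj : Function.Surjective π' := by
    intro m
    obtain ⟨nN, hnN⟩ : m - s (g m) ∈ LinearMap.range f := by
      rw [hfg, LinearMap.mem_ker, map_sub, hgs]
      simp
    obtain ⟨x, hx⟩ := hπN nN
    refine ⟨Sum.elim x (g m), ?_⟩
    rw [hπ'app]
    have e1 : (Sum.elim x (g m) : (Fin n' ⊕ Fin r) → R) ∘ Sum.inl = x := rfl
    have e2 : (Sum.elim x (g m) : (Fin n' ⊕ Fin r) → R) ∘ Sum.inr = g m := rfl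
    rw [e1, e2, hx, hnN]
    abel
  have hπ'ker : LinearMap.ker π' = LinearMap.range S.mulVecLin := by
    ext x
    simp only [LinearMap.mem_ker, LinearMap.mem_range]
    constructor
    · intro hx
      rw [hπ'app] at hx
      have hx2 : x ∘ Sum.inr = 0 := by
        have := congrArg g hx
        rw [map_add, hgf, map_zero, zero_add, hgs] at this
        exact this
      rw [hx2, map_zero, add_zero] at hx
      have hker : πN (x ∘ Sum.inl) = 0 := hf (by rw [hx, map_zero])
      rw [← LinearMap.mem_ker, hB] at hker
      obtain ⟨w, hw⟩ := hker
      refine ⟨w, ?_⟩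
      ext i
      rcases i with a | b
      · have : S.mulVecLin w (Sum.inl a) = B.mulVecLin w a := rfl
        rw [this, hw]
        rfl
      · have : S.mulVecLin w (Sum.inr b) = 0 := by
          simp [hS, Matrix.mulVecLin_apply, Matrix.mulVec, dotProduct]
        rw [this]
        exact (congrFun hx2 b).symm
    · rintro ⟨w, rfl⟩
      rw [hπ'app]
      have e1 : (S.mulVecLin w) ∘ Sum.inl = B.mulVec w := rfl
      have e2 : (S.mulVecLin w) ∘ Sum.inr = 0 := by
        ext b
        simp [hS, Matrix.mulVecLin_apply, Matrix.mulVec, dotProduct]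
      rw [e1, e2, map_zero, add_zero]
      have : πN (B.mulVec w) = 0 := by
        rw [← Matrix.mulVecLin_apply, ← LinearMap.mem_ker, hB]
        exact ⟨w, rfl⟩
      rw [this, map_zero]
  -- apply invariance
  have key : minorsIdeal A (n - r) = minorsIdeal S n' := by
    apply minorsIdeal_invariance πM hπM A hA π' hπ'surj S hπ'ker
    simp [Fintype.card_sum]
    omega
  have hstack : minorsIdeal S n' = minorsIdeal B n' := minorsIdeal_stack_zero B n'
  show minorsIdeal A (n - r) = minorsIdeal B (n' - 0)
  rw [Nat.sub_zero, key, hstack]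
end

section
/- Let K be a number field of degree r and j an integer. Under the comparison isomorphism ℝ ⊗ K ≅ (ℝ ⊗ H_K(j)^+) ⊕ (ℝ ⊗ H_K(j-1)^+) composed with the map (x,y) ↦ 2x + (1/2)(2πi)y into ℝ ⊗ H_K(j), the image α_j(x_1 ∧ ... ∧ x_r) of a ℤ-basis of O_K in the top exterior power, identified with ℝ via the standard basis of H_K(j), equals ± 2^{r_ℝ}(2π)^{r_ℂ} √|D_K| / (2π)^{jr} if j is even, and ± 2^{-r_ℝ}(2π)^{r_ℝ+r_ℂ} √|D_K| / (2π)^{jr} if j is odd. -/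
open Matrix Complex NumberField

variable {n : Type*} [Fintype n] [DecidableEq n]

omit [Fintype n] in
lemma permMatrix_isHermitian (τ : Equiv.Perm n) (hτ : ∀ i, τ (τ i) = i) :
    (τ.permMatrix ℂ).IsHermitian := by
  ext i j
  simp only [conjTranspose_apply, Equiv.Perm.permMatrix, PEquiv.toMatrix_apply,
    Equiv.toPEquiv_apply, Option.mem_def, Option.some.injEq]
  have h : (τ j = i) ↔ (τ i = j) := by
    constructor
    · rintro rfl; exact hτ j
    · rintro rfl; exact hτ i
  by_cases h1 : τ j = i
  · rw [if_pos h1, if_pos (h.mp h1)]; simp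
  · rw [if_neg h1, if_neg (fun hh => h1 (h.mpr hh))]; simp

lemma permMatrix_mul_self (τ : Equiv.Perm n) (hτ : ∀ i, τ (τ i) = i) :
    τ.permMatrix ℂ * τ.permMatrix ℂ = 1 := by
  rw [PEquiv.toMatrix_toPEquiv_mul]
  ext i j
  simp only [Matrix.submatrix_apply, id_eq, Equiv.Perm.permMatrix, PEquiv.toMatrix_apply,
    Equiv.toPEquiv_apply, Option.mem_def, Option.some.injEq, one_apply, hτ]

lemma det_smul_one_add_smul_permMatrix {τ : Equiv.Perm n} (hτ : ∀ i, τ (τ i) = i) (a b : ℂ) :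
    ∃ p q : ℕ, p + q = Fintype.card n ∧
      ((p : ℤ) - q = (Function.fixedPoints τ).ncard) ∧
      Matrix.det (a • (1 : Matrix n n ℂ) + b • τ.permMatrix ℂ) = (a + b) ^ p * (a - b) ^ q := by
  classical
  set P : Matrix n n ℂ := τ.permMatrix ℂ with hP
  have hHerm : P.IsHermitian := permMatrix_isHermitian τ hτ
  set U : Matrix n n ℂ := (hHerm.eigenvectorUnitary : Matrix n n ℂ) with hU
  have hUU : U * star U = 1 := (Matrix.mem_unitaryGroup_iff).mp hHerm.eigenvectorUnitary.2
  have hUU' : star U * U = 1 := (Matrix.mem_unitaryGroup_iff').mp hHerm.eigenvectorUnitary.2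
  set lam : n → ℝ := hHerm.eigenvalues with hlam
  set D : Matrix n n ℂ := diagonal (RCLike.ofReal ∘ lam) with hD
  have hspec : P = U * D * star U := hHerm.spectral_theorem
  have hD2 : D * D = 1 := by
    have h1 : (U * D * star U) * (U * D * star U) = 1 := by
      rw [← hspec]; exact permMatrix_mul_self τ hτ
    have h2 : star U * ((U * D * star U) * (U * D * star U)) * U = D * D := by
      calc star U * ((U * D * star U) * (U * D * star U)) * U
          = (star U * U) * D * (star U * U) * D * (star U * U) := by
            simp only [Matrix.mul_assoc]
        _ = D * D := by rw [hUU']; simp [Matrix.mul_assoc]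
    rw [h1, Matrix.mul_one, hUU'] at h2
    exact h2.symm
  have hpm : ∀ i, lam i = 1 ∨ lam i = -1 := by
    intro i
    have h1 : (RCLike.ofReal (lam i) : ℂ) * RCLike.ofReal (lam i) = 1 := by
      have := congrArg (fun M : Matrix n n ℂ => M i i) hD2
      simpa [hD, diagonal_mul_diagonal, diagonal_apply_eq, one_apply] using this
    have h2 : lam i * lam i = 1 := by
      have := congrArg Complex.re h1
      simpa using this
    exact mul_self_eq_one_iff.mp h2
  have key : a • (1 : Matrix n n ℂ) + b • P = U * (a • 1 + b • D) * star U := by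
    simp only [Matrix.mul_add, Matrix.add_mul, Matrix.mul_smul, Matrix.smul_mul,
      Matrix.mul_one, hUU, ← hspec]
  have hdet : (a • (1 : Matrix n n ℂ) + b • P).det = (a • (1 : Matrix n n ℂ) + b • D).det := by
    rw [key, Matrix.det_mul, Matrix.det_mul, mul_comm, ← mul_assoc, ← Matrix.det_mul, hUU',
      Matrix.det_one, one_mul]
  have hdiag : a • (1 : Matrix n n ℂ) + b • D = diagonal (fun i => a + b * lam i) := by
    ext i k
    rcases eq_or_ne i k with rfl | h
    · simp [hD, Matrix.one_apply, Matrix.diagonal_apply_eq, mul_comm]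
    · simp [hD, Matrix.one_apply_ne h, Matrix.diagonal_apply_ne _ h, h]
  set S : Finset n := Finset.univ.filter (fun i => lam i = 1) with hS
  refine ⟨S.card, Sᶜ.card, ?_, ?_, ?_⟩
  · rw [Finset.card_add_card_compl]
  · have htr : (Matrix.trace P : ℂ) = ((Function.fixedPoints τ).ncard : ℂ) := by
      simpa using Matrix.trace_permutation (R := ℂ) τ
    have htr2 : Matrix.trace P = Matrix.trace D := by
      rw [hspec, Matrix.trace_mul_cycle, hUU', Matrix.one_mul]
    have htrD : Matrix.trace D = ((S.card : ℂ) - (Sᶜ.card : ℂ)) := by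
      rw [hD, Matrix.trace_diagonal]
      rw [← Finset.sum_add_sum_compl S]
      have e1 : ∀ i ∈ S, (RCLike.ofReal ∘ lam) i = (1 : ℂ) := by
        intro i hi
        simp only [hS, Finset.mem_filter] at hi
        simp [hi.2]
      have e2 : ∀ i ∈ Sᶜ, (RCLike.ofReal ∘ lam) i = (-1 : ℂ) := by
        intro i hi
        simp only [hS, Finset.mem_compl, Finset.mem_filter, Finset.mem_univ, true_and] at hi
        rcases hpm i with h | h
        · exact absurd h hi
        · simp [h]
      rw [Finset.sum_congr rfl e1, Finset.sum_congr rfl e2]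
      simp [sub_eq_add_neg]
    have h3 : ((S.card : ℂ) - (Sᶜ.card : ℂ)) = ((Function.fixedPoints τ).ncard : ℂ) := by
      rw [← htrD, ← htr2, htr]
    have := congrArg Complex.re h3
    push_cast at this ⊢
    exact_mod_cast this
  · rw [hdet, hdiag, Matrix.det_diagonal, ← Finset.prod_mul_prod_compl S]
    congr 1
    · rw [Finset.prod_congr rfl (fun i hi => ?_), Finset.prod_const]
      simp only [hS, Finset.mem_filter] at hi
      simp [hi.2]
    · rw [Finset.prod_congr rfl (fun i hi => ?_), Finset.prod_const]
      simp only [hS, Finset.mem_compl, Finset.mem_filter, Finset.mem_univ, true_and] at hi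
      rcases hpm i with h | h
      · exact absurd h hi
      · simp [h, sub_eq_add_neg]

lemma det_sq_eq_discr {K : Type} [Field K] [NumberField K] {r : ℕ}
    (σ : Fin r ≃ (K →+* ℂ)) (b : Module.Basis (Fin r) ℤ (𝓞 K)) :
    (Matrix.of fun i k : Fin r => (σ i) (algebraMap (𝓞 K) K (b k))).det ^ 2
      = ((NumberField.discr K : ℚ) : ℂ) := by
  classical
  set bK : Fin r → K := fun i => algebraMap (𝓞 K) K (b i) with hbK
  set e : Fin r ≃ (K →ₐ[ℚ] ℂ) := σ.trans (RingHom.equivRatAlgHom K ℂ) with he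
  have hM : (Matrix.of fun i k : Fin r => (σ i) (algebraMap (𝓞 K) K (b k)))ᵀ
      = Algebra.embeddingsMatrixReindex ℚ ℂ bK e := by
    ext i k
    rfl
  have h1 : algebraMap ℚ ℂ (Algebra.discr ℚ bK)
      = (Algebra.embeddingsMatrixReindex ℚ ℂ bK e).det ^ 2 :=
    Algebra.discr_eq_det_embeddingsMatrixReindex_pow_two ℚ ℂ bK e
  have h2 : Algebra.discr ℚ bK = ((NumberField.discr K : ℚ)) := by
    have hfun : bK = ⇑(b.localizationLocalization ℚ (nonZeroDivisors ℤ) K) := by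
      funext i
      rw [Module.Basis.localizationLocalization_apply]
    rw [hfun, Algebra.discr_localizationLocalization ℤ (nonZeroDivisors ℤ) K b,
      discr_eq_discr K b]
    rfl
  rw [← hM, Matrix.det_transpose] at h1
  rw [← h1, h2]
  rfl


/-- Let `K` be a number field of degree `r` and `j` an integer.  The comparison
isomorphism `ℝ ⊗ K ≅ (ℝ ⊗ H_K(j)^+) ⊕ (ℝ ⊗ H_K(j-1)^+)`, composed with
`(x, y) ↦ 2x + (1/2)(2πi)y` into `ℝ ⊗ H_K(j)`, sends `x ∈ K` to the vector with
`σ`-coordinate `2·Re(σ(x)(2πi)^{-j}) + (1/2)·Re(σ(x)(2πi)^{1-j})` with respect to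
the standard basis of `H_K(j)`.  For a `ℤ`-basis `x_1, …, x_r` of `O_K`, the image
`α_j(x_1 ∧ ⋯ ∧ x_r)`, identified with a real number, equals
`± 2^{r_ℝ}(2π)^{r_ℂ} √|D_K| / (2π)^{jr}` if `j` is even and
`± 2^{-r_ℝ}(2π)^{r_ℝ + r_ℂ} √|D_K| / (2π)^{jr}` if `j` is odd. -/
theorem stmt12 (K : Type) [Field K] [NumberField K] (r rR rC : ℕ)
    (hr : r = Module.finrank ℚ K)
    (hrR : rR = Nat.card {v : NumberField.InfinitePlace K // v.IsReal})
    (hrC : rC = Nat.card {v : NumberField.InfinitePlace K // v.IsComplex})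
    (j : ℤ) (σ : Fin r ≃ (K →+* ℂ)) (b : Module.Basis (Fin r) ℤ (NumberField.RingOfIntegers K)) :
    ∃ ε : ℝ, (ε = 1 ∨ ε = -1) ∧
      Matrix.det (Matrix.of fun i k : Fin r =>
          2 * (((σ i) (algebraMap (NumberField.RingOfIntegers K) K (b k)) *
              (2 * (Real.pi : ℂ) * Complex.I) ^ (-j)).re)
          + (1 / 2) * (((σ i) (algebraMap (NumberField.RingOfIntegers K) K (b k)) *
              (2 * (Real.pi : ℂ) * Complex.I) ^ (1 - j)).re))
        = ε *
            (if Even j then (2 : ℝ) ^ rR * (2 * Real.pi) ^ rC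
              else ((2 : ℝ)⁻¹) ^ rR * (2 * Real.pi) ^ (rR + rC)) *
            Real.sqrt ((|NumberField.discr K| : ℤ) : ℝ) /
            (2 * Real.pi) ^ (j * (r : ℤ)) := by
  classical
  have hπ : (0 : ℝ) < Real.pi := Real.pi_pos
  have h2π : (0 : ℝ) < 2 * Real.pi := by linarith
  -- notation
  set M : Matrix (Fin r) (Fin r) ℝ := Matrix.of fun i k : Fin r =>
          2 * (((σ i) (algebraMap (NumberField.RingOfIntegers K) K (b k)) *
              (2 * (Real.pi : ℂ) * Complex.I) ^ (-j)).re)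
          + (1 / 2) * (((σ i) (algebraMap (NumberField.RingOfIntegers K) K (b k)) *
              (2 * (Real.pi : ℂ) * Complex.I) ^ (1 - j)).re) with hM
  set A : Matrix (Fin r) (Fin r) ℂ :=
    Matrix.of fun i k : Fin r => (σ i) (algebraMap (𝓞 K) K (b k)) with hA
  have h2πI : (2 * (Real.pi : ℂ) * Complex.I) ≠ 0 := by
    simp [Complex.ext_iff, Real.pi_ne_zero]
  set w : ℂ := (2 * (Real.pi : ℂ) * Complex.I) ^ (-j) with hw
  set c : ℂ := (1 + ((Real.pi / 2 : ℝ) : ℂ) * Complex.I) * w with hc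
  -- the involution
  have hinv : Function.Involutive
      (fun i : Fin r => σ.symm (ComplexEmbedding.conjugate (σ i))) := by
    intro i
    simp [ComplexEmbedding.conjugate]
  set τ : Equiv.Perm (Fin r) := hinv.toPerm with hτdef
  have hττ : ∀ i, τ (τ i) = i := fun i => hinv i
  have hστ : ∀ i, σ (τ i) = ComplexEmbedding.conjugate (σ i) := by
    intro i
    simp [hτdef, Function.Involutive.toPerm]
  -- key factorization
  have hfact : M.map (Complex.ofRealHom) =
      (c • (1 : Matrix (Fin r) (Fin r) ℂ) + (starRingEnd ℂ c) • τ.permMatrix ℂ) * A := by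
    ext i k
    have hrow : A (τ i) k = starRingEnd ℂ (A i k) := by
      simp only [hA, Matrix.of_apply]
      rw [hστ i]
      rfl
    have hmul : ((c • (1 : Matrix (Fin r) (Fin r) ℂ) + (starRingEnd ℂ c) • τ.permMatrix ℂ) * A)
        i k = c * A i k + (starRingEnd ℂ c) * A (τ i) k := by
      rw [Matrix.add_mul, Matrix.smul_mul, Matrix.smul_mul, Matrix.one_mul]
      rw [PEquiv.toMatrix_toPEquiv_mul]
      simp [hτdef]
    rw [hmul, hrow, ← _root_.map_mul]
    set z : ℂ := A i k with hz
    have hadd : c * z + (starRingEnd ℂ) (c * z) = ((2 * (c * z).re : ℝ) : ℂ) := by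
      rw [Complex.add_conj]
    rw [hadd]
    -- entry computation
    have hw' : (2 * (Real.pi : ℂ) * Complex.I) ^ (1 - j)
        = (2 * (Real.pi : ℂ) * Complex.I) * w := by
      rw [hw, sub_eq_add_neg, zpow_add₀ h2πI, zpow_one]
    have hM' : M i k = 2 * (z * w).re + (1/2) * (z * ((2 * (Real.pi : ℂ) * Complex.I) * w)).re := by
      rw [hM]
      simp only [Matrix.of_apply, ← hw', hw, hz, hA, Matrix.of_apply]
      rw [hw', hw]
    have hcz : c * z = z * w + ((Real.pi / 2 : ℝ) : ℂ) * (Complex.I * (z * w)) := by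
      rw [hc]; ring
    have hz2 : z * ((2 * (Real.pi : ℂ) * Complex.I) * w)
        = ((2 * Real.pi : ℝ) : ℂ) * (Complex.I * (z * w)) := by
      push_cast; ring
    simp only [Matrix.map_apply, Complex.ofRealHom_eq_coe, hM', hcz, hz2]
    rw [Complex.add_re, Complex.re_ofReal_mul, Complex.re_ofReal_mul]
    push_cast
    ring
  -- determinant of the C factor
  obtain ⟨p, q, hpq, hfix, hdetC⟩ :=
    det_smul_one_add_smul_permMatrix hττ c (starRingEnd ℂ c)
  rw [Fintype.card_fin] at hpq
  -- number of fixed points is rR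
  have hfixcard : (Function.fixedPoints ⇑τ).ncard = rR := by
    have e1 : {i : Fin r // τ i = i} ≃ {φ : K →+* ℂ // ComplexEmbedding.IsReal φ} := by
      refine Equiv.subtypeEquiv σ fun i => ?_
      rw [show τ i = σ.symm (ComplexEmbedding.conjugate (σ i)) from rfl,
        Equiv.symm_apply_eq, ComplexEmbedding.isReal_iff, eq_comm]
    have e0 : ↥(Function.fixedPoints ⇑τ) ≃ {i : Fin r // τ i = i} :=
      Equiv.subtypeEquivRight fun i => Iff.rfl
    rw [← Nat.card_coe_set_eq, Nat.card_congr (e0.trans e1), Nat.card_eq_fintype_card,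
      NumberField.InfinitePlace.card_real_embeddings, hrR, Nat.card_eq_fintype_card]
  have hrr2 : rR + 2 * rC = r := by
    rw [hrR, hrC, Nat.card_eq_fintype_card, Nat.card_eq_fintype_card, hr]
    exact NumberField.InfinitePlace.card_add_two_mul_card_eq_rank K
  rw [hfixcard] at hfix
  have hp : p = rR + rC := by omega
  have hq : q = rC := by omega
  -- determinant over ℂ
  have hdetMC : ((M.det : ℝ) : ℂ)
      = (c + starRingEnd ℂ c) ^ p * (c - starRingEnd ℂ c) ^ q * A.det := by
    have h0 := congrArg Matrix.det hfact
    rw [Matrix.det_mul, hdetC] at h0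
    rw [← h0]
    exact RingHom.map_det Complex.ofRealHom M
  -- |det A| = sqrt |discr|
  have habsA : ‖A.det‖ = Real.sqrt (((|NumberField.discr K| : ℤ) : ℝ)) := by
    have hA2 : A.det ^ 2 = ((NumberField.discr K : ℚ) : ℂ) := det_sq_eq_discr σ b
    have h1 : ‖A.det‖ ^ 2 = ((|NumberField.discr K| : ℤ) : ℝ) := by
      rw [← norm_pow, hA2, show ((NumberField.discr K : ℚ) : ℂ)
        = (((NumberField.discr K : ℤ) : ℝ) : ℂ) by push_cast; rfl, Complex.norm_real, Real.norm_eq_abs]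
      push_cast
      rfl
    rw [← h1, Real.sqrt_sq (norm_nonneg _)]
  -- |w|
  have habsw : ‖w‖ = (2 * Real.pi) ^ (-j) := by
    rw [hw, norm_zpow]
    congr 1
    rw [norm_mul, norm_mul, Complex.norm_two, Complex.norm_I, Complex.norm_real, Real.norm_eq_abs,
      abs_of_pos hπ, mul_one]
  have hconj2πI : (starRingEnd ℂ) (2 * (Real.pi : ℂ) * Complex.I)
      = -(2 * (Real.pi : ℂ) * Complex.I) := by
    simp only [_root_.map_mul, Complex.conj_I, Complex.conj_ofReal, map_ofNat]
    ring
  have hconju : (starRingEnd ℂ) (1 + ((Real.pi / 2 : ℝ) : ℂ) * Complex.I)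
      = 1 - ((Real.pi / 2 : ℝ) : ℂ) * Complex.I := by
    rw [_root_.map_add, _root_.map_one, _root_.map_mul, Complex.conj_I, Complex.conj_ofReal]
    ring
  set S : ℝ := Real.sqrt (((|NumberField.discr K| : ℤ) : ℝ)) with hS
  have hSnn : 0 ≤ S := Real.sqrt_nonneg _
  set G : ℝ := (2 * Real.pi) ^ (-j) with hG
  have hGpos : 0 < G := zpow_pos h2π _
  have hGr : G ^ (rR + rC) * G ^ rC = ((2 * Real.pi) ^ (j * (r : ℤ)))⁻¹ := by
    rw [hG, ← pow_add, ← zpow_natCast ((2 * Real.pi) ^ (-j)), ← _root_.zpow_mul, ← _root_.zpow_neg]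
    congr 1
    have hcast : ((rR : ℤ) + rC + rC) = r := by omega
    push_cast
    linear_combination (-j) * hcast
  -- split on parity
  rcases Int.even_or_odd j with hEven | hOdd
  · -- even case
    have hcw : (starRingEnd ℂ) w = w := by
      rw [hw, _root_.map_zpow₀, hconj2πI, (hEven.neg).neg_zpow]
    have hsum : c + starRingEnd ℂ c = 2 * w := by
      rw [hc, _root_.map_mul, hcw, hconju]; ring
    have hdiff : c - starRingEnd ℂ c = ((Real.pi : ℂ)) * Complex.I * w := by
      rw [hc, _root_.map_mul, hcw, hconju]
      push_cast
      ring
    have habsM : |M.det| = (2 * G) ^ p * (Real.pi * G) ^ q * S := by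
      have h1 : ((M.det : ℝ) : ℂ) = (2 * w) ^ p * ((Real.pi : ℂ) * Complex.I * w) ^ q * A.det := by
        rw [hdetMC, hsum, hdiff]
      have h2 := congrArg (‖·‖) h1
      rw [Complex.norm_real, Real.norm_eq_abs] at h2
      rw [h2]
      simp only [norm_mul, norm_pow, Complex.norm_two, Complex.norm_I,
        Complex.norm_real, Real.norm_eq_abs, habsw, habsA]
      rw [abs_of_pos hπ]
      ring
    have hval : (2 * G) ^ p * (Real.pi * G) ^ q * S
        = 1 * ((2 : ℝ) ^ rR * (2 * Real.pi) ^ rC) * S / (2 * Real.pi) ^ (j * (r : ℤ)) := by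
      rw [hp, hq, div_eq_mul_inv, ← hGr, mul_pow, mul_pow]
      ring
    rw [if_pos hEven]
    have hR := habsM.trans hval
    rcases abs_eq (by positivity : (0:ℝ) ≤ 1 * ((2 : ℝ) ^ rR * (2 * Real.pi) ^ rC) * S
        / (2 * Real.pi) ^ (j * (r : ℤ))) |>.mp hR with h | h
    · exact ⟨1, Or.inl rfl, by rw [h]⟩
    · exact ⟨-1, Or.inr rfl, by rw [h]; ring⟩
  · -- odd case
    have hcw : (starRingEnd ℂ) w = -w := by
      rw [hw, _root_.map_zpow₀, hconj2πI, (hOdd.neg).neg_zpow]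
    have hsum : c + starRingEnd ℂ c = ((Real.pi : ℂ)) * Complex.I * w := by
      rw [hc, _root_.map_mul, hcw, hconju]
      push_cast
      ring
    have hdiff : c - starRingEnd ℂ c = 2 * w := by
      rw [hc, _root_.map_mul, hcw, hconju]; ring
    have habsM : |M.det| = (Real.pi * G) ^ p * (2 * G) ^ q * S := by
      have h1 : ((M.det : ℝ) : ℂ) = ((Real.pi : ℂ) * Complex.I * w) ^ p * (2 * w) ^ q * A.det := by
        rw [hdetMC, hsum, hdiff]
      have h2 := congrArg (‖·‖) h1
      rw [Complex.norm_real, Real.norm_eq_abs] at h2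
      rw [h2]
      simp only [norm_mul, norm_pow, Complex.norm_two, Complex.norm_I,
        Complex.norm_real, Real.norm_eq_abs, habsw, habsA]
      rw [abs_of_pos hπ]
      ring
    have hval : (Real.pi * G) ^ p * (2 * G) ^ q * S
        = 1 * (((2 : ℝ)⁻¹) ^ rR * (2 * Real.pi) ^ (rR + rC)) * S
          / (2 * Real.pi) ^ (j * (r : ℤ)) := by
      rw [hp, hq, div_eq_mul_inv, ← hGr, mul_pow, mul_pow, mul_pow]
      have h2 : ((2 : ℝ)⁻¹) ^ rR * ((2 : ℝ) ^ rR * Real.pi ^ rR) = Real.pi ^ rR := by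
        rw [← mul_assoc, ← mul_pow, inv_mul_cancel₀ (two_ne_zero), one_pow, one_mul]
      field_simp
      have h3 : (1/2:ℝ)^rR * 2^rR = 1 := by rw [← mul_pow]; norm_num
      linear_combination (-(S*2^rC)) * h3
    rw [if_neg (Int.not_even_iff_odd.mpr hOdd)]
    have hR := habsM.trans hval
    rcases abs_eq (by positivity : (0:ℝ) ≤ 1 * (((2 : ℝ)⁻¹) ^ rR * (2 * Real.pi) ^ (rR + rC)) * S
        / (2 * Real.pi) ^ (j * (r : ℤ))) |>.mp hR with h | h
    · exact ⟨1, Or.inl rfl, by rw [h]⟩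
    · exact ⟨-1, Or.inr rfl, by rw [h]; ring⟩
end
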